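/- Let g(x,y,ρ) be as above with -1 < ρ < 1. Then |∂g/∂x (x,y,ρ)| = 4φ(x)·|Φ((y-ρx)/√(1-ρ²)) - Φ(y)| ≤ |ρ| for all x, y. -/

import Mathlib

open MeasureTheory Real

noncomputable def stdphi (x : ℝ) : ℝ := Real.exp (-x ^ 2 / 2) / Real.sqrt (2 * Real.pi)

noncomputable def stdPhi (x : ℝ) : ℝ := ∫ t in Set.Iic x, stdphi t

noncomputable def g (x y ρ : ℝ) : ℝ :=
  2 * ∫ u, Real.sign (x - u) * stdphi u *
      (stdPhi ((y - ρ * u) / Real.sqrt (1 - ρ ^ 2)) - stdPhi y)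

lemma stdphi_continuous : Continuous stdphi := by
  unfold stdphi; fun_prop

lemma stdphi_nonneg (x : ℝ) : 0 ≤ stdphi x :=
  div_nonneg (Real.exp_nonneg _) (Real.sqrt_nonneg _)

lemma sqrt_two_pi_pos : 0 < Real.sqrt (2 * Real.pi) :=
  Real.sqrt_pos.2 (by positivity)

lemma stdphi_integrable : Integrable stdphi := by
  have h := (integrable_exp_neg_mul_sq (by norm_num : (0:ℝ) < 1/2)).div_const
    (Real.sqrt (2 * Real.pi))
  have : (fun x : ℝ => Real.exp (-(1/2) * x ^ 2) / Real.sqrt (2 * Real.pi)) = stdphi := by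
    funext x; unfold stdphi; ring_nf
  rwa [this] at h

lemma integral_stdphi : ∫ u, stdphi u = 1 := by
  unfold stdphi
  rw [integral_div]
  have : (fun x : ℝ => Real.exp (-x ^ 2 / 2)) = fun x : ℝ => Real.exp (-(1/2) * x ^ 2) := by
    funext x; ring_nf
  rw [this, integral_gaussian]
  rw [div_eq_one_iff_eq (ne_of_gt sqrt_two_pi_pos)]
  rw [Real.sqrt_mul (by norm_num : (0:ℝ) ≤ 2), show Real.pi / (1/2) = 2 * Real.pi by ring,
    Real.sqrt_mul (by norm_num : (0:ℝ) ≤ 2)]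

lemma stdPhi_hasDerivAt (x : ℝ) : HasDerivAt stdPhi (stdphi x) x := by
  have hfun : stdPhi = fun t => stdPhi 0 + ∫ u in (0:ℝ)..t, stdphi u := by
    funext t
    have := intervalIntegral.integral_Iic_sub_Iic (μ := volume)
      stdphi_integrable.integrableOn stdphi_integrable.integrableOn (a := (0:ℝ)) (b := t)
    unfold stdPhi
    linarith [this]
  rw [hfun]
  exact ((stdphi_continuous.integral_hasStrictDerivAt 0 x).hasDerivAt).const_add (stdPhi 0)

lemma stdPhi_continuous : Continuous stdPhi := by
  have : Differentiable ℝ stdPhi := fun x => (stdPhi_hasDerivAt x).differentiableAt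
  exact this.continuous

lemma stdPhi_mono {a b : ℝ} (hab : a ≤ b) : stdPhi a ≤ stdPhi b := by
  unfold stdPhi
  refine setIntegral_mono_set stdphi_integrable.integrableOn ?_ ?_
  · exact Filter.Eventually.of_forall fun u => stdphi_nonneg u
  · exact HasSubset.Subset.eventuallyLE (Set.Iic_subset_Iic.2 hab)

lemma stdPhi_nonneg (x : ℝ) : 0 ≤ stdPhi x :=
  setIntegral_nonneg measurableSet_Iic fun u _ => stdphi_nonneg u

lemma stdPhi_le_one (x : ℝ) : stdPhi x ≤ 1 := by
  rw [← integral_stdphi]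
  exact setIntegral_le_integral stdphi_integrable
    (Filter.Eventually.of_forall fun u => stdphi_nonneg u)

lemma stdphi_even (x : ℝ) : stdphi (-x) = stdphi x := by
  unfold stdphi; ring_nf

lemma stdPhi_neg (x : ℝ) : stdPhi (-x) = 1 - stdPhi x := by
  have h1 : stdPhi (-x) = ∫ t in Set.Ioi x, stdphi t := by
    have h2 := integral_comp_neg_Iic (-x) stdphi
    rw [neg_neg] at h2
    unfold stdPhi
    rw [← h2]
    exact setIntegral_congr_fun measurableSet_Iic fun t _ => (stdphi_even t).symm
  have h3 := intervalIntegral.integral_Iic_add_Ioi (μ := volume) (b := x)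
    stdphi_integrable.integrableOn stdphi_integrable.integrableOn
  rw [integral_stdphi] at h3
  rw [h1]
  unfold stdPhi
  linarith


lemma stdPhi_zero : stdPhi 0 = 1/2 := by
  have h := stdPhi_neg 0
  rw [neg_zero] at h
  linarith

lemma stdphi_anti {a b : ℝ} (h0 : 0 ≤ a) (hab : a ≤ b) : stdphi b ≤ stdphi a := by
  unfold stdphi
  gcongr rexp ?_ / _
  nlinarith

lemma stdphi_le (x : ℝ) : stdphi x ≤ 1 / Real.sqrt (2 * Real.pi) := by
  unfold stdphi
  gcongr ?_ / _
  rw [Real.exp_le_one_iff]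
  nlinarith [sq_nonneg x]

lemma stdPhi_lipschitz (a b : ℝ) :
    |stdPhi a - stdPhi b| ≤ |a - b| / Real.sqrt (2 * Real.pi) := by
  wlog hab : b ≤ a generalizing a b
  · have h := this b a (le_of_not_ge hab)
    rwa [abs_sub_comm, abs_sub_comm b a] at h
  rw [abs_of_nonneg (sub_nonneg.2 (stdPhi_mono hab)), abs_of_nonneg (sub_nonneg.2 hab)]
  have heq : stdPhi a - stdPhi b = ∫ u in b..a, stdphi u :=
    intervalIntegral.integral_Iic_sub_Iic stdphi_integrable.integrableOn
      stdphi_integrable.integrableOn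
  have hle : ∫ u in b..a, stdphi u ≤ ∫ _u in b..a, (1 / Real.sqrt (2 * Real.pi)) :=
    intervalIntegral.integral_mono_on hab (stdphi_continuous.intervalIntegrable _ _)
      intervalIntegrable_const (fun u _ => stdphi_le u)
  rw [intervalIntegral.integral_const, smul_eq_mul] at hle
  rw [heq]
  calc ∫ u in b..a, stdphi u ≤ (a - b) * (1 / Real.sqrt (2 * Real.pi)) := hle
    _ = (a - b) / Real.sqrt (2 * Real.pi) := by ring

lemma key0 (s z : ℝ) (hs0 : 0 < s) (hs1 : s ≤ 1) (hz : 0 ≤ z) :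
    stdPhi z - stdPhi (s * z) ≤ (1 - s) / 2 := by
  have hle : s * z ≤ z := by nlinarith
  have hX0 : 0 ≤ z * stdphi (s * z) := mul_nonneg hz (stdphi_nonneg _)
  have hb1 : stdPhi z - stdPhi (s * z) ≤ (1 - s) * (z * stdphi (s * z)) := by
    have heq : stdPhi z - stdPhi (s * z) = ∫ u in (s * z)..z, stdphi u :=
      intervalIntegral.integral_Iic_sub_Iic stdphi_integrable.integrableOn
        stdphi_integrable.integrableOn
    have h3 : ∫ u in (s * z)..z, stdphi u ≤ ∫ _u in (s * z)..z, stdphi (s * z) :=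
      intervalIntegral.integral_mono_on hle (stdphi_continuous.intervalIntegrable _ _)
        intervalIntegrable_const
        (fun u hu => stdphi_anti (mul_nonneg hs0.le hz) hu.1)
    rw [intervalIntegral.integral_const, smul_eq_mul] at h3
    rw [heq]
    calc ∫ u in (s * z)..z, stdphi u ≤ (z - s * z) * stdphi (s * z) := h3
      _ = (1 - s) * (z * stdphi (s * z)) := by ring
  have hb2 : stdPhi z - stdPhi (s * z) ≤ 1 / 2 - s * (z * stdphi (s * z)) := by
    have heq : stdPhi (s * z) - stdPhi 0 = ∫ u in (0:ℝ)..(s * z), stdphi u :=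
      intervalIntegral.integral_Iic_sub_Iic stdphi_integrable.integrableOn
        stdphi_integrable.integrableOn
    have h3 : ∫ _u in (0:ℝ)..(s * z), stdphi (s * z) ≤ ∫ u in (0:ℝ)..(s * z), stdphi u :=
      intervalIntegral.integral_mono_on (mul_nonneg hs0.le hz) intervalIntegrable_const
        (stdphi_continuous.intervalIntegrable _ _)
        (fun u hu => stdphi_anti hu.1 hu.2)
    rw [intervalIntegral.integral_const, smul_eq_mul, sub_zero] at h3
    rw [stdPhi_zero] at heq
    have h4 := stdPhi_le_one z
    nlinarith
  by_cases hc : z * stdphi (s * z) ≤ 1 / 2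
  · nlinarith
  · push_neg at hc
    nlinarith

lemma key (s w : ℝ) (hs0 : 0 < s) (hs1 : s ≤ 1) :
    |stdPhi (w / s) - stdPhi w| ≤ (1 - s) / 2 := by
  set z := w / s with hz
  have hw : w = s * z := by rw [hz]; field_simp [hs0.ne']
  rcases le_or_gt 0 z with hz0 | hz0
  · have hle : s * z ≤ z := by nlinarith
    rw [hw, abs_of_nonneg (sub_nonneg.2 (stdPhi_mono hle))]
    exact key0 s z hs0 hs1 hz0
  · have hle : z ≤ s * z := by nlinarith
    rw [hw, abs_sub_comm, abs_of_nonneg (sub_nonneg.2 (stdPhi_mono hle))]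
    have h6 : stdPhi (s * z) - stdPhi z = stdPhi (-z) - stdPhi (s * -z) := by
      rw [show s * -z = -(s * z) by ring, stdPhi_neg, stdPhi_neg]
      ring
    rw [h6]
    exact key0 s (-z) hs0 hs1 (by linarith)

lemma bound_poly (x : ℝ) : 4 * stdphi x * (|x| / Real.sqrt (2 * Real.pi) + 1 / 2) ≤ 1 := by
  have hpi := Real.pi_gt_d6
  have hsqrt : (2.5066 : ℝ) ≤ Real.sqrt (2 * Real.pi) := by
    rw [show (2.5066 : ℝ) = Real.sqrt (2.5066 ^ 2) by
      rw [Real.sqrt_sq (by norm_num)]]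
    exact Real.sqrt_le_sqrt (by nlinarith)
  have hc : 1 / Real.sqrt (2 * Real.pi) ≤ 0.399 := by
    rw [div_le_iff₀ sqrt_two_pi_pos]
    nlinarith
  have hc0 : 0 < 1 / Real.sqrt (2 * Real.pi) := by positivity
  set t := |x| with ht
  have ht0 : 0 ≤ t := abs_nonneg x
  have hphit : stdphi x = Real.exp (-t ^ 2 / 2) * (1 / Real.sqrt (2 * Real.pi)) := by
    unfold stdphi
    rw [ht, sq_abs]
    ring
  have hexp : Real.exp (-t ^ 2 / 2) * (1 + t ^ 2 / 2 + t ^ 4 / 16) ≤ 1 := by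
    have h1 : (1 + t ^ 2 / 4) ≤ Real.exp (t ^ 2 / 4) := by
      linarith [Real.add_one_le_exp (t ^ 2 / 4)]
    have h2 : (1 + t ^ 2 / 4) ^ 2 ≤ Real.exp (t ^ 2 / 2) := by
      have := mul_le_mul h1 h1 (by positivity) (Real.exp_nonneg _)
      rw [← Real.exp_add] at this
      calc (1 + t ^ 2 / 4) ^ 2 = (1 + t ^ 2 / 4) * (1 + t ^ 2 / 4) := sq _
        _ ≤ Real.exp (t ^ 2 / 4 + t ^ 2 / 4) := this
        _ = Real.exp (t ^ 2 / 2) := by ring_nf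
    have h3 : Real.exp (-t ^ 2 / 2) * Real.exp (t ^ 2 / 2) = 1 := by
      rw [← Real.exp_add, show -t ^ 2 / 2 + t ^ 2 / 2 = 0 by ring, Real.exp_zero]
    nlinarith [Real.exp_pos (-t ^ 2 / 2), Real.exp_pos (t ^ 2 / 2)]
  rw [hphit]
  have hpoly : 0.399 * (0.399 * t * 4 + 2) ≤ 1 + t ^ 2 / 2 + t ^ 4 / 16 := by
    nlinarith [sq_nonneg (t - 3/5), sq_nonneg (t ^ 2 - 9/25), sq_nonneg (t * (t - 3/5)), sq_nonneg t]
  have hE0 : 0 < Real.exp (-t ^ 2 / 2) := Real.exp_pos _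
  have step : 4 * (Real.exp (-t ^ 2 / 2) * (1 / Real.sqrt (2 * Real.pi))) *
      (t * (1 / Real.sqrt (2 * Real.pi)) + 1 / 2) ≤
      Real.exp (-t ^ 2 / 2) * (0.399 * (0.399 * t * 4 + 2)) := by
    have h1 : t * (1 / Real.sqrt (2 * Real.pi)) ≤ t * 0.399 :=
      mul_le_mul_of_nonneg_left hc ht0
    nlinarith [mul_le_mul_of_nonneg_left hc ht0, hc, hc0, mul_pos hE0 hc0]
  calc 4 * (Real.exp (-t ^ 2 / 2) * (1 / Real.sqrt (2 * Real.pi))) *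
      (t / Real.sqrt (2 * Real.pi) + 1 / 2)
      = 4 * (Real.exp (-t ^ 2 / 2) * (1 / Real.sqrt (2 * Real.pi))) *
      (t * (1 / Real.sqrt (2 * Real.pi)) + 1 / 2) := by ring
    _ ≤ Real.exp (-t ^ 2 / 2) * (0.399 * (0.399 * t * 4 + 2)) := step
    _ ≤ Real.exp (-t ^ 2 / 2) * (1 + t ^ 2 / 2 + t ^ 4 / 16) :=
        mul_le_mul_of_nonneg_left hpoly hE0.le
    _ ≤ 1 := hexp

theorem stmt14 (ρ : ℝ) (h1 : -1 < ρ) (h2 : ρ < 1) (x y : ℝ) :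
    HasDerivAt (fun t => g t y ρ)
      (4 * stdphi x * (stdPhi ((y - ρ * x) / Real.sqrt (1 - ρ ^ 2)) - stdPhi y)) x ∧
    |4 * stdphi x * (stdPhi ((y - ρ * x) / Real.sqrt (1 - ρ ^ 2)) - stdPhi y)| ≤ |ρ| := by
  have hρ2 : 0 < 1 - ρ ^ 2 := by nlinarith
  have hs0 : 0 < Real.sqrt (1 - ρ ^ 2) := Real.sqrt_pos.2 hρ2
  constructor
  · -- derivative part
    set h : ℝ → ℝ := fun u =>
      stdphi u * (stdPhi ((y - ρ * u) / Real.sqrt (1 - ρ ^ 2)) - stdPhi y) with hh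
    have hcont : Continuous h := by
      apply stdphi_continuous.mul
      apply Continuous.sub _ continuous_const
      exact stdPhi_continuous.comp (by fun_prop)
    have habs : ∀ u, |h u| ≤ stdphi u := by
      intro u
      rw [hh]
      simp only
      rw [abs_mul, abs_of_nonneg (stdphi_nonneg u)]
      have h01 : |stdPhi ((y - ρ * u) / Real.sqrt (1 - ρ ^ 2)) - stdPhi y| ≤ 1 := by
        rw [abs_sub_le_iff]
        constructor <;>
          linarith [stdPhi_nonneg ((y - ρ * u) / Real.sqrt (1 - ρ ^ 2)),
            stdPhi_le_one ((y - ρ * u) / Real.sqrt (1 - ρ ^ 2)), stdPhi_nonneg y,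
            stdPhi_le_one y]
      nlinarith [stdphi_nonneg u, abs_nonneg (stdPhi ((y - ρ * u) / Real.sqrt (1 - ρ ^ 2)) - stdPhi y)]
    have hint : Integrable h :=
      stdphi_integrable.mono hcont.aestronglyMeasurable
        (Filter.Eventually.of_forall fun u => by
          rw [Real.norm_eq_abs, Real.norm_eq_abs, abs_of_nonneg (stdphi_nonneg u)]
          exact habs u)
    have hgrep : ∀ t, g t y ρ = 4 * (∫ u in Set.Iic t, h u) - 2 * ∫ u, h u := by
      intro t
      have hne : ∀ᵐ u : ℝ, u ≠ t := by
        have hsing : volume ({t} : Set ℝ) = 0 := measure_singleton t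
        rw [Filter.eventually_iff, mem_ae_iff]
        convert hsing using 2
        ext u
        simp
      have hae : (fun u => Real.sign (t - u) * stdphi u *
          (stdPhi ((y - ρ * u) / Real.sqrt (1 - ρ ^ 2)) - stdPhi y)) =ᵐ[volume]
          fun u => 2 * Set.indicator (Set.Iic t) h u - h u := by
        filter_upwards [hne] with u hu
        rcases lt_or_gt_of_ne hu with hlt | hgt
        · rw [Real.sign_of_pos (by linarith : 0 < t - u),
            Set.indicator_of_mem (Set.mem_Iic.2 hlt.le)]
          rw [hh]; ring
        · rw [Real.sign_of_neg (by linarith : t - u < 0),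
            Set.indicator_of_notMem (by simpa using hgt)]
          rw [hh]; ring
      unfold g
      rw [integral_congr_ae hae,
        integral_sub ((hint.indicator measurableSet_Iic).const_mul 2) hint,
        MeasureTheory.integral_const_mul, integral_indicator measurableSet_Iic]
      ring
    have hF : HasDerivAt (fun t => ∫ u in Set.Iic t, h u) (h x) x := by
      have hfun : (fun t => ∫ u in Set.Iic t, h u) =
          fun t => (∫ u in Set.Iic (0:ℝ), h u) + ∫ u in (0:ℝ)..t, h u := by
        funext t
        have := intervalIntegral.integral_Iic_sub_Iic (μ := volume)
          hint.integrableOn hint.integrableOn (a := (0:ℝ)) (b := t)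
        linarith
      rw [hfun]
      exact ((hcont.integral_hasStrictDerivAt 0 x).hasDerivAt).const_add _
    have hgfun : (fun t => g t y ρ) =
        fun t => 4 * (∫ u in Set.Iic t, h u) - 2 * ∫ u, h u := funext hgrep
    rw [hgfun]
    have hD := (hF.const_mul 4).sub_const (2 * ∫ u, h u)
    exact hD.congr_deriv (by rw [hh]; ring)
  · -- bound part
    set s : ℝ := Real.sqrt (1 - ρ ^ 2) with hsdef
    have hssq : s ^ 2 = 1 - ρ ^ 2 := Real.sq_sqrt hρ2.le
    have hs1 : s ≤ 1 := by nlinarith [sq_nonneg ρ]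
    have h1s : 1 - s ≤ |ρ| := by nlinarith [abs_nonneg ρ, sq_abs ρ]
    have ha := key s (y - ρ * x) hs0 hs1
    have hb := stdPhi_lipschitz (y - ρ * x) y
    have hyx : |y - ρ * x - y| = |ρ| * |x| := by
      rw [show y - ρ * x - y = -(ρ * x) by ring, abs_neg, abs_mul]
    rw [hyx] at hb
    have hsplit : |stdPhi ((y - ρ * x) / s) - stdPhi y| ≤
        |ρ| * (|x| / Real.sqrt (2 * Real.pi) + 1 / 2) := by
      calc |stdPhi ((y - ρ * x) / s) - stdPhi y|
          ≤ |stdPhi ((y - ρ * x) / s) - stdPhi (y - ρ * x)| +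
            |stdPhi (y - ρ * x) - stdPhi y| := abs_sub_le _ _ _
        _ ≤ (1 - s) / 2 + |ρ| * |x| / Real.sqrt (2 * Real.pi) := add_le_add ha hb
        _ ≤ |ρ| / 2 + |ρ| * |x| / Real.sqrt (2 * Real.pi) := by linarith
        _ = |ρ| * (|x| / Real.sqrt (2 * Real.pi) + 1 / 2) := by ring
    have hphi0 : 0 ≤ 4 * stdphi x := by linarith [stdphi_nonneg x]
    calc |4 * stdphi x * (stdPhi ((y - ρ * x) / s) - stdPhi y)|
        = 4 * stdphi x * |stdPhi ((y - ρ * x) / s) - stdPhi y| := by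
          rw [abs_mul, abs_of_nonneg hphi0]
      _ ≤ 4 * stdphi x * (|ρ| * (|x| / Real.sqrt (2 * Real.pi) + 1 / 2)) :=
          mul_le_mul_of_nonneg_left hsplit hphi0
      _ = |ρ| * (4 * stdphi x * (|x| / Real.sqrt (2 * Real.pi) + 1 / 2)) := by ring
      _ ≤ |ρ| * 1 := mul_le_mul_of_nonneg_left (bound_poly x) (abs_nonneg ρ)
      _ = |ρ| := mul_one _
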